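/- With the paper's construction: if g_i and g_j do not commute in A_Γ (i.e. {i,j} ∈ P), then S_j ⊆ X ∖ S_i, and consequently h_i(S_j) ⊆ S_i⁺ = S_i ∩ C_i(1) and h_i⁻¹(S_j) ⊆ S_i⁻ = S_i ∩ C_i(0). -/

import Mathlib

/-- The group of self-homeomorphisms of a topological space. -/
instance homeoGroup (X : Type*) [TopologicalSpace X] : Group (X ≃ₜ X) where
  mul f g := g.trans f
  one := Homeomorph.refl X
  inv := Homeomorph.symm
  mul_assoc f g h := rfl
  one_mul f := rfl
  mul_one f := rfl
  inv_mul_cancel f := by ext x; exact f.symm_apply_apply x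

/-- Prepend a finite word to an infinite sequence. -/
def prependSeq {A : Type*} (α : List A) (x : ℕ → A) : ℕ → A :=
  fun k => if h : k < α.length then α.get ⟨k, h⟩ else x (k - α.length)

/-- `x` begins with the finite word `α`. -/
def beginsWith {A : Type*} (α : List A) (x : ℕ → A) : Prop :=
  ∃ y, x = prependSeq α y

/-- The subcube of the Cantor cube `∏ i, (A i)^ω` determined by a tuple of prefixes. -/
def subcube {ι : Type*} (A : ι → Type*) (α : ∀ i, List (A i)) :
    Set (∀ i, ℕ → A i) :=
  {x | ∀ i, beginsWith (α i) (x i)}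

/-- Prepend a tuple of finite words coordinatewise. -/
def cubePrepend {ι : Type*} (A : ι → Type*) (α : ∀ i, List (A i))
    (y : ∀ i, ℕ → A i) : ∀ i, ℕ → A i :=
  fun i => prependSeq (α i) (y i)


/-- Relators of a right-angled Artin group: commutators of adjacent generators. -/
def raagRels {V : Type*} (G : SimpleGraph V) : Set (FreeGroup V) :=
  {r | ∃ i j, G.Adj i j ∧
    r = FreeGroup.of i * FreeGroup.of j * (FreeGroup.of i)⁻¹ * (FreeGroup.of j)⁻¹}

/-- The right-angled Artin group of a simple graph. -/
def RAAG {V : Type*} (G : SimpleGraph V) := PresentedGroup (raagRels G)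

noncomputable instance {V : Type*} (G : SimpleGraph V) : Group (RAAG G) := by
  unfold RAAG; infer_instance

/-- The standard generators of a right-angled Artin group. -/
def raagGen {V : Type*} (G : SimpleGraph V) (v : V) : RAAG G :=
  PresentedGroup.of v

variable {n : ℕ}

/-- The set `P` of (unordered) pairs of non-commuting generators. -/
def ncP (G : SimpleGraph (Fin n)) : Set (Sym2 (Fin n)) :=
  {p | ∃ i j, p = s(i, j) ∧ ¬ Commute (raagGen G i) (raagGen G j)}

/-- Index set for the Cantor cube `X`: one binary coordinate for each generator
and one coordinate for each non-commuting pair. -/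
def raagIdx (G : SimpleGraph (Fin n)) : Type := (Fin n) ⊕ (ncP G)

/-- The alphabets of the cube `X`: `{0,1}` for generator coordinates and
`{i, j, ∅}` for the coordinate of a pair `{i,j} ∈ P`. -/
def raagAlph (G : SimpleGraph (Fin n)) : raagIdx G → Type :=
  fun k => match k with
  | Sum.inl _ => Bool
  | Sum.inr p => Option {v : Fin n // v ∈ (p : Sym2 (Fin n))}

noncomputable instance (G : SimpleGraph (Fin n)) (k : raagIdx G) :
    TopologicalSpace (raagAlph G k) := ⊥

instance (G : SimpleGraph (Fin n)) (k : raagIdx G) :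
    DiscreteTopology (raagAlph G k) := ⟨rfl⟩

/-- The Cantor cube `X` of the construction. -/
abbrev raagCube (G : SimpleGraph (Fin n)) : Type := ∀ k, ℕ → raagAlph G k

/-- `C_i(α)`: points whose binary coordinate `x_i` begins with `α`. -/
def Cset (G : SimpleGraph (Fin n)) (i : Fin n) (α : List Bool) :
    Set (raagCube G) :=
  {x | beginsWith α (x (Sum.inl i))}

/-- `S_i`: points all of whose coordinates `x_{ij}`, `j ∈ P_i`, begin with `i`. -/
def Scube (G : SimpleGraph (Fin n)) (i : Fin n) : Set (raagCube G) :=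
  {x | ∀ (p : ncP G) (h : i ∈ (p : Sym2 (Fin n))), x (Sum.inr p) 0 = some ⟨i, h⟩}

open Classical in
/-- `F_i`: prepend the symbol `i` to each coordinate `x_{ij}`, `j ∈ P_i`. -/
noncomputable def Fmap (G : SimpleGraph (Fin n)) (i : Fin n) :
    raagCube G → raagCube G := fun x k =>
  match k with
  | Sum.inl j => x (Sum.inl j)
  | Sum.inr p =>
      if h : i ∈ (p : Sym2 (Fin n)) then
        prependSeq [some ⟨i, h⟩] (x (Sum.inr p))
      else x (Sum.inr p)

open Classical in
/-- `F_i⁻¹`: delete the first symbol of each coordinate `x_{ij}`, `j ∈ P_i`. -/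
noncomputable def Fdrop (G : SimpleGraph (Fin n)) (i : Fin n) :
    raagCube G → raagCube G := fun x k =>
  match k with
  | Sum.inl j => x (Sum.inl j)
  | Sum.inr p =>
      if i ∈ (p : Sym2 (Fin n)) then (fun m => x (Sum.inr p) (m + 1))
      else x (Sum.inr p)

/-- `L_{i,α}`: prepend the binary word `α` to the coordinate `x_i`. -/
def Lmap (G : SimpleGraph (Fin n)) (i : Fin n) (α : List Bool) :
    raagCube G → raagCube G := fun x k =>
  match k with
  | Sum.inl j => if j = i then prependSeq α (x (Sum.inl j)) else x (Sum.inl j)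
  | Sum.inr p => x (Sum.inr p)

/-- `L_{i,α}⁻¹` for a word of length `m`: delete the first `m` symbols of `x_i`. -/
def Ldrop (G : SimpleGraph (Fin n)) (i : Fin n) (m : ℕ) :
    raagCube G → raagCube G := fun x k =>
  match k with
  | Sum.inl j => if j = i then (fun t => x (Sum.inl j) (t + m)) else x (Sum.inl j)
  | Sum.inr p => x (Sum.inr p)

/-- `S_{ii} = F_i(S_i)`. -/
def Sii (G : SimpleGraph (Fin n)) (i : Fin n) : Set (raagCube G) :=
  Fmap G i '' Scube G i

open Classical in
/-- The five-piece homeomorphism `h_i` of the paper's construction. -/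
noncomputable def hmap (G : SimpleGraph (Fin n)) (i : Fin n) :
    raagCube G → raagCube G := fun x =>
  if x ∉ Scube G i then Lmap G i [true, false] (Fmap G i x)
  else if x ∈ Sii G i then x
  else if beginsWith [true] (x (Sum.inl i)) then Lmap G i [true] x
  else if beginsWith [false, true] (x (Sum.inl i)) then Fdrop G i (Ldrop G i 2 x)
  else Ldrop G i 1 x

lemma beginsWith_singleton {A : Type*} (a : A) (x : ℕ → A) :
    beginsWith [a] x ↔ x 0 = a := by
  constructor
  · rintro ⟨y, rfl⟩; rfl
  · intro h
    refine ⟨fun m => x (m + 1), ?_⟩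
    funext k
    match k with
    | 0 => simpa [prependSeq] using h
    | (m+1) => simp [prependSeq]

lemma beginsWith_head {A : Type*} (a : A) (l : List A) (x : ℕ → A)
    (h : beginsWith (a :: l) x) : x 0 = a := by
  obtain ⟨y, rfl⟩ := h
  simp [prependSeq]

/-- If `x ∉ S_i`, then `h_i x ∈ S_i ∩ C_i(10)`. -/
lemma hmap_not_mem (G : SimpleGraph (Fin n)) (i : Fin n) (x : raagCube G)
    (hx : x ∉ Scube G i) :
    hmap G i x ∈ Scube G i ∩ Cset G i [true] := by
  have hh : hmap G i x = Lmap G i [true, false] (Fmap G i x) := by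
    unfold hmap; rw [if_pos hx]
  constructor
  · intro p hp
    rw [hh]
    show Fmap G i x (Sum.inr p) 0 = _
    simp [Fmap, hp, prependSeq]
    rfl
  · rw [hh]
    show beginsWith [true] (Lmap G i [true, false] (Fmap G i x) (Sum.inl i))
    refine (beginsWith_singleton _ _).2 ?_
    simp [Lmap, prependSeq]
    rfl

/-- If `g_i` and `g_j` do not commute then `S_j ⊆ X ∖ S_i`, and consequently
`h_i(S_j) ⊆ S_i⁺ = S_i ∩ C_i(1)` and `h_i⁻¹(S_j) ⊆ S_i⁻ = S_i ∩ C_i(0)`. -/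
theorem hmap_noncommuting_pair (G : SimpleGraph (Fin n)) (i j : Fin n)
    (hij : ¬ Commute (raagGen G i) (raagGen G j)) :
    Scube G j ⊆ (Scube G i)ᶜ ∧
    hmap G i '' Scube G j ⊆ Scube G i ∩ Cset G i [true] ∧
    hmap G i ⁻¹' (Scube G j) ⊆ Scube G i ∩ Cset G i [false] := by
  have hne : i ≠ j := by rintro rfl; exact hij (Commute.refl _)
  set p : ncP G := ⟨s(i, j), ⟨i, j, rfl, hij⟩⟩ with hp
  have hi : i ∈ (p : Sym2 (Fin n)) := by simp [hp]
  have hj : j ∈ (p : Sym2 (Fin n)) := by simp [hp]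
  have h1 : Scube G j ⊆ (Scube G i)ᶜ := by
    intro x hxj hxi
    have e1 := hxi p hi
    have e2 := hxj p hj
    rw [e1] at e2
    exact hne (congrArg Subtype.val (Option.some.inj e2))
  refine ⟨h1, ?_, ?_⟩
  · rintro _ ⟨x, hxj, rfl⟩
    exact hmap_not_mem G i x (h1 hxj)
  · intro x hx
    have hxi : x ∈ Scube G i := by
      by_contra hxi
      exact h1 hx (hmap_not_mem G i x hxi).1
    by_cases hs : x ∈ Sii G i
    · have hh : hmap G i x = x := by
        unfold hmap; rw [if_neg (not_not_intro hxi), if_pos hs]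
      have hx' : hmap G i x ∈ Scube G j := hx
      rw [hh] at hx'
      exact absurd hxi (h1 hx')
    by_cases hb1 : beginsWith [true] (x (Sum.inl i))
    · have hh : hmap G i x = Lmap G i [true] x := by
        unfold hmap; rw [if_neg (not_not_intro hxi), if_neg hs, if_pos hb1]
      have hxj : x ∈ Scube G j := by
        intro q hq
        have hx' : hmap G i x ∈ Scube G j := hx
        have := hx' q hq
        rw [hh] at this
        exact this
      exact absurd hxi (h1 hxj)
    refine ⟨hxi, ?_⟩
    show beginsWith [false] (x (Sum.inl i))
    refine (beginsWith_singleton _ _).2 ?_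
    cases hb : x (Sum.inl i) 0
    · rfl
    · exact absurd ((beginsWith_singleton _ _).2 hb) hb1
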